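/- If A is a real lower-triangular n×n matrix, then its matrix exponential exp(A) is lower triangular, and for every index i the diagonal entry satisfies (exp A) i i = Real.exp (A i i); in particular every diagonal entry of exp(A) is strictly positive. -/

import Mathlib

attribute [local instance] Matrix.linftyOpNormedRing Matrix.linftyOpNormedAlgebra

private lemma pow_lower_tri {n : ℕ} (A : Matrix (Fin n) (Fin n) ℝ)
    (hA : ∀ i j : Fin n, i < j → A i j = 0) (k : ℕ) :
    (∀ i j : Fin n, i < j → (A ^ k) i j = 0) ∧ (∀ i : Fin n, (A ^ k) i i = (A i i) ^ k) := by
  induction k with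
  | zero =>
    simp [Matrix.one_apply]
    intro i j hij
    exact fun h => absurd h hij.ne
  | succ k ih =>
    constructor
    · intro i j hij
      rw [pow_succ, Matrix.mul_apply]
      apply Finset.sum_eq_zero
      intro l _
      rcases lt_or_ge i l with h | h
      · rw [ih.1 i l h, zero_mul]
      · rw [hA l j (lt_of_le_of_lt h hij), mul_zero]
    · intro i
      rw [pow_succ, Matrix.mul_apply]
      rw [Finset.sum_eq_single i]
      · rw [ih.2 i, pow_succ]
      · intro l _ hl
        rcases lt_or_gt_of_ne hl with h | h
        · rw [hA l i h, mul_zero]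
        · rw [ih.1 i l h, zero_mul]
      · simp
    
/-- If `A` is a real lower-triangular `n × n` matrix, then its matrix exponential
`exp A` is lower triangular, its diagonal entries are `Real.exp (A i i)`, and in
particular they are strictly positive. -/
theorem exp_of_lower_triangular (n : ℕ) (A : Matrix (Fin n) (Fin n) ℝ)
    (hA : ∀ i j : Fin n, i < j → A i j = 0) :
    (∀ i j : Fin n, i < j → NormedSpace.exp A i j = 0) ∧
    (∀ i : Fin n, NormedSpace.exp A i i = Real.exp (A i i)) ∧
    (∀ i : Fin n, 0 < NormedSpace.exp A i i) := by
  have hs : Summable (fun k : ℕ => (Nat.factorial k : ℝ)⁻¹ • A ^ k) :=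
    NormedSpace.expSeries_summable' (𝕂 := ℝ) A
  have hrow : ∀ i : Fin n, Summable (fun k : ℕ => ((Nat.factorial k : ℝ)⁻¹ • A ^ k) i) := by
    intro i
    exact Summable.map hs
      (LinearMap.proj (R := ℝ) (φ := fun _ : Fin n => Fin n → ℝ) i)
      (continuous_apply i)
  have hexp : ∀ i j : Fin n,
      NormedSpace.exp A i j = ∑' k : ℕ, ((Nat.factorial k : ℝ)⁻¹ • A ^ k) i j := by
    intro i j
    rw [NormedSpace.exp_eq_tsum ℝ]
    show (∑' k : ℕ, (Nat.factorial k : ℝ)⁻¹ • A ^ k) i j = _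
    erw [tsum_apply hs, tsum_apply (hrow i)]
  have hdiag : ∀ i : Fin n, NormedSpace.exp A i i = Real.exp (A i i) := by
    intro i
    rw [hexp i i, Real.exp_eq_exp_ℝ, NormedSpace.exp_eq_tsum ℝ]
    congr 1
    ext k
    simp [Matrix.smul_apply, (pow_lower_tri A hA k).2 i, smul_eq_mul]
  refine ⟨?_, hdiag, fun i => (hdiag i) ▸ Real.exp_pos _⟩
  intro i j hij
  rw [hexp i j]
  simp [Matrix.smul_apply, (pow_lower_tri A hA _).1 i j hij]
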